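/- Let N ≥ 3 be odd, m = (N−1)/2, β ≠ 0 a real number, and ω_k = √(1 + 4 sin²(kπ/N)) for 1 ≤ k ≤ m, ω_N = 1. Define the quadratic polynomial h on ℝ^{2m+1} in the variables (α_1, …, α_m, μ_1, …, μ_m, γ) by h = (β/(2N)) [ (3/4) Σ_{k=1}^m (3α_k² − μ_k²)/ω_k² + (3/2) γ²/ω_N² + 6 (γ/ω_N) Σ_{k=1}^m α_k/ω_k + 6 Σ_{1≤k<l≤m} α_k α_l/(ω_k ω_l) ]. Then the (2m+1)×(2m+1) Hessian matrix of h (a constant matrix) is invertible. In particular the truncated normal form of the periodic KG lattice with N odd satisfies the Kolmogorov nondegeneracy condition in the action variables (a_1, …, a_m, b_1, …, b_m, a_N). -/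

import Mathlib

noncomputable section

open Finset

/-- Index `j` (0-based) as an element of `Fin (2m+1)`. -/
def vidx (m j : ℕ) : Fin (2 * m + 1) := ⟨j % (2 * m + 1), Nat.mod_lt _ (Nat.succ_pos _)⟩

/-- The normal-mode frequencies `ω_k = √(1 + 4 sin²(kπ/N))` (note `ω_N = 1`). -/
def omg (N k : ℕ) : ℝ := Real.sqrt (1 + 4 * Real.sin (k * Real.pi / N) ^ 2)

/-- The quadratic polynomial `h` on `ℝ^{2m+1}` in the variables
`(α_1, …, α_m, μ_1, …, μ_m, γ)` (stored as `v = (α, μ, γ)` with `α_k = v_{k−1}`,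
`μ_k = v_{m+k−1}`, `γ = v_{2m}` in 0-based components):
`h = (β/(2N)) [ (3/4) Σ_k (3α_k² − μ_k²)/ω_k² + (3/2) γ²/ω_N²
+ 6 (γ/ω_N) Σ_k α_k/ω_k + 6 Σ_{k<l} α_k α_l/(ω_k ω_l) ]`. -/
def hquad (m N : ℕ) (β : ℝ) (v : Fin (2 * m + 1) → ℝ) : ℝ :=
  β / (2 * N) *
    ((3 / 4) * ∑ k ∈ Finset.Icc 1 m,
        (3 * v (vidx m (k - 1)) ^ 2 - v (vidx m (m + k - 1)) ^ 2) / omg N k ^ 2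
      + (3 / 2) * v (vidx m (2 * m)) ^ 2 / omg N N ^ 2
      + 6 * (v (vidx m (2 * m)) / omg N N) * ∑ k ∈ Finset.Icc 1 m, v (vidx m (k - 1)) / omg N k
      + 6 * ∑ k ∈ Finset.Icc 1 m, ∑ l ∈ Finset.Icc (k + 1) m,
          v (vidx m (k - 1)) * v (vidx m (l - 1)) / (omg N k * omg N l))

lemma omg_pos (N k : ℕ) : 0 < omg N k := Real.sqrt_pos.mpr (by positivity)

lemma omg_ne (N k : ℕ) : omg N k ≠ 0 := (omg_pos N k).ne'

lemma omg_N_eq_one {N : ℕ} (hN : N ≠ 0) : omg N N = 1 := by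
  have hN' : (N : ℝ) ≠ 0 := Nat.cast_ne_zero.mpr hN
  unfold omg
  have : (N : ℝ) * Real.pi / N = Real.pi := by field_simp
  rw [this, Real.sin_pi]
  norm_num



lemma hasFDeriv_quad {n : ℕ} (A : Fin n → Fin n → ℝ) (v : Fin n → ℝ) :
    HasFDerivAt (fun v : Fin n → ℝ => ∑ p, ∑ q, A p q * (v p * v q))
      (∑ p, ∑ q, A p q • ((v p) • (ContinuousLinearMap.proj q : (Fin n → ℝ) →L[ℝ] ℝ)
        + (v q) • (ContinuousLinearMap.proj p : (Fin n → ℝ) →L[ℝ] ℝ))) v := by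
  apply HasFDerivAt.fun_sum
  intro p _
  apply HasFDerivAt.fun_sum
  intro q _
  have h := ((ContinuousLinearMap.proj p : (Fin n → ℝ) →L[ℝ] ℝ)).hasFDerivAt (x := v) |>.mul
    (((ContinuousLinearMap.proj q : (Fin n → ℝ) →L[ℝ] ℝ)).hasFDerivAt (x := v))
  exact h.const_mul (A p q)

lemma fderiv_quad_apply {n : ℕ} (A : Fin n → Fin n → ℝ) (v : Fin n → ℝ) (j : Fin n) :
    fderiv ℝ (fun v : Fin n → ℝ => ∑ p, ∑ q, A p q * (v p * v q)) v (Pi.single j 1)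
      = (∑ p, A p j * v p) + ∑ q, A j q * v q := by
  rw [(hasFDeriv_quad A v).fderiv]
  simp only [ContinuousLinearMap.sum_apply, ContinuousLinearMap.smul_apply,
    ContinuousLinearMap.add_apply, ContinuousLinearMap.proj_apply, Pi.single_apply,
    smul_eq_mul, mul_ite, mul_one, mul_zero, mul_add]
  simp only [Finset.sum_add_distrib]
  congr 1
  · simp [Finset.sum_ite_eq', mul_comm]
  · rw [Finset.sum_comm]
    simp [Finset.sum_ite_eq', mul_comm]

lemma hess_quad {n : ℕ} (A : Fin n → Fin n → ℝ) (i j : Fin n) :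
    fderiv ℝ (fun v => fderiv ℝ (fun v : Fin n → ℝ => ∑ p, ∑ q, A p q * (v p * v q)) v
      (Pi.single j 1)) 0 (Pi.single i 1) = A i j + A j i := by
  have h1 : (fun v : Fin n → ℝ => fderiv ℝ (fun v : Fin n → ℝ => ∑ p, ∑ q, A p q * (v p * v q)) v
      (Pi.single j 1)) = fun v => (∑ p, A p j * v p) + ∑ q, A j q * v q :=
    funext fun v => fderiv_quad_apply A v j
  rw [h1]
  have h2 : HasFDerivAt (fun v : Fin n → ℝ => (∑ p, A p j * v p) + ∑ q, A j q * v q)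
      ((∑ p, A p j • (ContinuousLinearMap.proj p : (Fin n → ℝ) →L[ℝ] ℝ))
        + ∑ q, A j q • (ContinuousLinearMap.proj q : (Fin n → ℝ) →L[ℝ] ℝ)) 0 := by
    apply HasFDerivAt.add
    · exact HasFDerivAt.fun_sum fun p _ =>
        (((ContinuousLinearMap.proj p : (Fin n → ℝ) →L[ℝ] ℝ)).hasFDerivAt
          (x := (0 : Fin n → ℝ))).const_mul (A p j)
    · exact HasFDerivAt.fun_sum fun q _ =>
        (((ContinuousLinearMap.proj q : (Fin n → ℝ) →L[ℝ] ℝ)).hasFDerivAt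
          (x := (0 : Fin n → ℝ))).const_mul (A j q)
  rw [h2.fderiv]
  simp [ContinuousLinearMap.sum_apply, Pi.single_apply, mul_ite, Finset.sum_ite_eq']

def wv (m N : ℕ) : Fin (2 * m + 1) → ℝ := fun i =>
  if (i : ℕ) < m then 1 / omg N ((i : ℕ) + 1) else if (i : ℕ) = 2 * m then 1 else 0

def dv (m N : ℕ) : Fin (2 * m + 1) → ℝ := fun i =>
  if (i : ℕ) < m then -(3 / 2) / omg N ((i : ℕ) + 1) ^ 2
  else if (i : ℕ) = 2 * m then -3
  else -(3 / 2) / omg N ((i : ℕ) - m + 1) ^ 2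

def Mmat (m N : ℕ) (β : ℝ) : Matrix (Fin (2 * m + 1)) (Fin (2 * m + 1)) ℝ :=
  Matrix.of fun i j => β / (2 * N) *
    (6 * wv m N i * wv m N j + if i = j then dv m N i else 0)

lemma vidx_val (m j : ℕ) (h : j < 2 * m + 1) : ((vidx m j : Fin (2 * m + 1)) : ℕ) = j :=
  Nat.mod_eq_of_lt h

lemma sum_fin_split (m : ℕ) (g : Fin (2 * m + 1) → ℝ) :
    ∑ i, g i = (∑ k ∈ Icc 1 m, g (vidx m (k - 1)))
      + (∑ k ∈ Icc 1 m, g (vidx m (m + k - 1))) + g (vidx m (2 * m)) := by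
  have h0 : ∀ i : Fin (2 * m + 1), g i = g (vidx m i.val) := by
    intro i
    congr 1
    exact Fin.ext (Nat.mod_eq_of_lt i.isLt).symm
  have hIcc : ∀ F : ℕ → ℝ, ∑ k ∈ Icc 1 m, F k = ∑ j ∈ range m, F (1 + j) := by
    intro F
    rw [← Finset.Ico_add_one_right_eq_Icc, Finset.sum_Ico_eq_sum_range]
    simp
  calc ∑ i, g i = ∑ j ∈ range (2 * m + 1), g (vidx m j) := by
        rw [← Fin.sum_univ_eq_sum_range (fun j => g (vidx m j))]
        exact Finset.sum_congr rfl fun i _ => h0 i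
    _ = ∑ j ∈ range (2 * m), g (vidx m j) + g (vidx m (2 * m)) := Finset.sum_range_succ _ _
    _ = (∑ j ∈ range m, g (vidx m j)) + (∑ j ∈ range m, g (vidx m (m + j)))
          + g (vidx m (2 * m)) := by
        congr 1
        rw [Finset.range_eq_Ico,
          ← Finset.sum_Ico_consecutive (fun j => g (vidx m j)) (Nat.zero_le m)
            (by omega : m ≤ 2 * m)]
        congr 1
        · rw [Finset.range_eq_Ico]
        rw [Finset.sum_Ico_eq_sum_range, show 2 * m - m = m by omega,
          Finset.range_eq_Ico]
    _ = _ := by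
        congr 1
        congr 1
        · rw [hIcc]
          exact Finset.sum_congr rfl fun j _ => by
            congr 1
            congr 1
            omega
        · rw [hIcc]
          exact Finset.sum_congr rfl fun j _ => by
            congr 1
            congr 1
            omega

lemma sq_sum_Icc (f : ℕ → ℝ) (m : ℕ) :
    (∑ k ∈ Icc 1 m, f k) ^ 2 = ∑ k ∈ Icc 1 m, f k ^ 2
      + 2 * ∑ k ∈ Icc 1 m, ∑ l ∈ Icc (k + 1) m, f k * f l := by
  induction m with
  | zero => simp
  | succ m ih =>
    have hd : ∑ k ∈ Icc 1 (m + 1), ∑ l ∈ Icc (k + 1) (m + 1), f k * f l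
        = (∑ k ∈ Icc 1 m, ∑ l ∈ Icc (k + 1) m, f k * f l)
          + (∑ k ∈ Icc 1 m, f k) * f (m + 1) := by
      rw [Finset.sum_Icc_succ_top (by omega)]
      have : ∀ k ∈ Icc 1 m, ∑ l ∈ Icc (k + 1) (m + 1), f k * f l
          = (∑ l ∈ Icc (k + 1) m, f k * f l) + f k * f (m + 1) := by
        intro k hk
        have hk' : k + 1 ≤ m + 1 := by
          have := (Finset.mem_Icc.mp hk).2; omega
        rw [Finset.sum_Icc_succ_top hk']
      rw [Finset.sum_congr rfl this, Finset.sum_add_distrib]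
      have : Icc (m + 1 + 1) (m + 1) = (∅ : Finset ℕ) := Finset.Icc_eq_empty (by omega)
      rw [this]
      simp [Finset.sum_mul]
    rw [Finset.sum_Icc_succ_top (by omega : 1 ≤ m + 1),
      Finset.sum_Icc_succ_top (by omega : 1 ≤ m + 1), hd]
    ring_nf
    ring_nf at ih
    linarith [ih]

lemma wv_eval1 {m N k : ℕ} (h1 : 1 ≤ k) (h2 : k ≤ m) :
    wv m N (vidx m (k - 1)) = 1 / omg N k := by
  unfold wv
  rw [vidx_val m _ (by omega)]
  rw [if_pos (by omega : k - 1 < m), show k - 1 + 1 = k by omega]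

lemma wv_eval2 {m N k : ℕ} (h1 : 1 ≤ k) (h2 : k ≤ m) :
    wv m N (vidx m (m + k - 1)) = 0 := by
  unfold wv
  rw [vidx_val m _ (by omega)]
  rw [if_neg (by omega), if_neg (by omega)]

lemma wv_eval3 (m N : ℕ) : wv m N (vidx m (2 * m)) = 1 := by
  unfold wv
  rw [vidx_val m _ (by omega)]
  rw [if_neg (by omega), if_pos rfl]

lemma dv_eval1 {m N k : ℕ} (h1 : 1 ≤ k) (h2 : k ≤ m) :
    dv m N (vidx m (k - 1)) = -(3 / 2) / omg N k ^ 2 := by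
  unfold dv
  rw [vidx_val m _ (by omega)]
  rw [if_pos (by omega : k - 1 < m), show k - 1 + 1 = k by omega]

lemma dv_eval2 {m N k : ℕ} (h1 : 1 ≤ k) (h2 : k ≤ m) :
    dv m N (vidx m (m + k - 1)) = -(3 / 2) / omg N k ^ 2 := by
  unfold dv
  rw [vidx_val m _ (by omega)]
  rw [if_neg (by omega), if_neg (by omega), show m + k - 1 - m + 1 = k by omega]

lemma dv_eval3 (m N : ℕ) : dv m N (vidx m (2 * m)) = -3 := by
  unfold dv
  rw [vidx_val m _ (by omega)]
  rw [if_neg (by omega), if_pos rfl]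

lemma hquad_eq (m N : ℕ) (hN : N ≠ 0) (β : ℝ) :
    hquad m N β = fun v => ∑ p, ∑ q, Mmat m N β p q / 2 * (v p * v q) := by
  funext v
  simp only [hquad]
  rw [omg_N_eq_one hN]
  set c : ℝ := β / (2 * N) with hc
  set G : ℝ := v (vidx m (2 * m)) with hG
  set T1 : ℝ := ∑ k ∈ Icc 1 m, v (vidx m (k - 1)) ^ 2 / omg N k ^ 2 with hT1
  set T2 : ℝ := ∑ k ∈ Icc 1 m, v (vidx m (m + k - 1)) ^ 2 / omg N k ^ 2 with hT2
  set T3 : ℝ := ∑ k ∈ Icc 1 m, v (vidx m (k - 1)) / omg N k with hT3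
  set T4 : ℝ := ∑ k ∈ Icc 1 m, ∑ l ∈ Icc (k + 1) m,
      (v (vidx m (k - 1)) / omg N k) * (v (vidx m (l - 1)) / omg N l) with hT4
  set S : ℝ := ∑ q, wv m N q * v q with hS
  -- the RHS, row by row
  have hrow : ∀ p, ∑ q, Mmat m N β p q / 2 * (v p * v q)
      = (wv m N p * v p) * (3 * c * S) + c / 2 * (dv m N p * v p ^ 2) := by
    intro p
    have hterm : ∀ q, Mmat m N β p q / 2 * (v p * v q)
        = (wv m N p * v p) * (3 * c * (wv m N q * v q))
          + (if p = q then c / 2 * (dv m N p * v p ^ 2) else 0) := by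
      intro q
      by_cases h : p = q
      · subst h
        simp [Mmat]
        ring
      · simp only [Mmat, Matrix.of_apply, if_neg h]
        ring
    rw [Finset.sum_congr rfl fun q _ => hterm q, Finset.sum_add_distrib,
      Finset.sum_ite_eq univ p, if_pos (Finset.mem_univ p), ← Finset.mul_sum,
      ← Finset.mul_sum, ← hS]
  have hRHS : ∑ p, ∑ q, Mmat m N β p q / 2 * (v p * v q)
      = S * (3 * c * S) + c / 2 * ∑ p, dv m N p * v p ^ 2 := by
    rw [Finset.sum_congr rfl fun p _ => hrow p, Finset.sum_add_distrib,
      ← Finset.sum_mul, ← Finset.mul_sum, ← hS]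
  rw [hRHS]
  -- identify S
  have hSv : S = T3 + G := by
    rw [hS, sum_fin_split m (fun i => wv m N i * v i)]
    have hB : ∑ k ∈ Icc 1 m, wv m N (vidx m (m + k - 1)) * v (vidx m (m + k - 1)) = 0 :=
      Finset.sum_eq_zero fun k hk => by
        obtain ⟨h1, h2⟩ := Finset.mem_Icc.mp hk
        rw [wv_eval2 h1 h2, zero_mul]
    have hA : ∑ k ∈ Icc 1 m, wv m N (vidx m (k - 1)) * v (vidx m (k - 1)) = T3 := by
      rw [hT3]
      refine Finset.sum_congr rfl fun k hk => ?_
      obtain ⟨h1, h2⟩ := Finset.mem_Icc.mp hk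
      rw [wv_eval1 h1 h2]
      ring
    rw [hA, hB, wv_eval3, one_mul, add_zero]
  -- identify the diagonal sum
  have hD : ∑ p, dv m N p * v p ^ 2 = -(3 / 2) * T1 + -(3 / 2) * T2 + -3 * G ^ 2 := by
    rw [sum_fin_split m (fun i => dv m N i * v i ^ 2)]
    congr 1
    · congr 1
      · rw [hT1, Finset.mul_sum]
        refine Finset.sum_congr rfl fun k hk => ?_
        obtain ⟨h1, h2⟩ := Finset.mem_Icc.mp hk
        rw [dv_eval1 h1 h2]
        ring
      · rw [hT2, Finset.mul_sum]
        refine Finset.sum_congr rfl fun k hk => ?_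
        obtain ⟨h1, h2⟩ := Finset.mem_Icc.mp hk
        rw [dv_eval2 h1 h2]
        ring
    · rw [dv_eval3]
  -- identify the LHS sums
  have hq1 : ∑ k ∈ Icc 1 m,
      (3 * v (vidx m (k - 1)) ^ 2 - v (vidx m (m + k - 1)) ^ 2) / omg N k ^ 2
      = 3 * T1 - T2 := by
    rw [hT1, hT2, Finset.mul_sum, ← Finset.sum_sub_distrib]
    refine Finset.sum_congr rfl fun k _ => ?_
    ring
  have hq4 : ∑ k ∈ Icc 1 m, ∑ l ∈ Icc (k + 1) m,
      v (vidx m (k - 1)) * v (vidx m (l - 1)) / (omg N k * omg N l) = T4 := by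
    rw [hT4]
    refine Finset.sum_congr rfl fun k _ => Finset.sum_congr rfl fun l _ => ?_
    rw [div_mul_div_comm]
  have hsq : T3 ^ 2 = T1 + 2 * T4 := by
    rw [hT3, sq_sum_Icc (fun k => v (vidx m (k - 1)) / omg N k) m, ← hT4]
    congr 1
    rw [hT1]
    refine Finset.sum_congr rfl fun k _ => ?_
    rw [div_pow]
  rw [hq1, hq4, hD, hSv]
  linear_combination (-3 * c) * hsq

lemma Mmat_symm (m N : ℕ) (β : ℝ) (i j : Fin (2 * m + 1)) :
    Mmat m N β i j = Mmat m N β j i := by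
  by_cases h : i = j
  · subst h; rfl
  · simp only [Mmat, Matrix.of_apply, if_neg h, if_neg (Ne.symm h)]
    ring

lemma Mmat_isUnit (m N : ℕ) (hN : N ≠ 0) (β : ℝ) (hβ : β ≠ 0) :
    IsUnit (Mmat m N β) := by
  rw [Matrix.isUnit_iff_isUnit_det, isUnit_iff_ne_zero]
  intro hdet
  obtain ⟨v, hv0, hmv⟩ := Matrix.exists_mulVec_eq_zero_iff.mpr hdet
  have hNR : (N : ℝ) ≠ 0 := Nat.cast_ne_zero.mpr hN
  have hc : β / (2 * (N : ℝ)) ≠ 0 := div_ne_zero hβ (mul_ne_zero two_ne_zero hNR)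
  set S : ℝ := ∑ q, wv m N q * v q with hS
  have key : ∀ i, 6 * wv m N i * S + dv m N i * v i = 0 := by
    intro i
    have h0 : ∑ j, Mmat m N β i j * v j = 0 := by
      have := congrFun hmv i
      simpa [Matrix.mulVec, dotProduct] using this
    have hterm : ∀ j, Mmat m N β i j * v j
        = (β / (2 * N) * (6 * wv m N i)) * (wv m N j * v j)
          + (if i = j then β / (2 * N) * (dv m N i * v i) else 0) := by
      intro j
      by_cases h : i = j
      · subst h; simp [Mmat]; ring
      · simp only [Mmat, Matrix.of_apply, if_neg h]; ring
    rw [Finset.sum_congr rfl fun j _ => hterm j, Finset.sum_add_distrib,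
      Finset.sum_ite_eq univ i, if_pos (Finset.mem_univ i), ← Finset.mul_sum, ← hS] at h0
    have h1 : β / (2 * (N : ℝ)) * (6 * wv m N i * S + dv m N i * v i) = 0 := by
      linear_combination h0
    exact (mul_eq_zero.mp h1).resolve_left hc
  have hval : ∀ i : Fin (2 * m + 1), v i =
      if (i : ℕ) < m then 4 * omg N ((i : ℕ) + 1) * S
      else if (i : ℕ) = 2 * m then 2 * S else 0 := by
    intro i
    have hk := key i
    by_cases h1 : (i : ℕ) < m
    · rw [if_pos h1]
      unfold wv dv at hk
      rw [if_pos h1, if_pos h1] at hk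
      have hω := omg_ne N ((i : ℕ) + 1)
      field_simp at hk
      have h2 : (3 * omg N ((i : ℕ) + 1)) * (4 * omg N ((i : ℕ) + 1) * S - v i) = 0 := by
        linear_combination omg N ((i : ℕ) + 1) * hk
      have h3 := (mul_eq_zero.mp h2).resolve_left (mul_ne_zero three_ne_zero hω)
      linarith
    · rw [if_neg h1]
      by_cases h2 : (i : ℕ) = 2 * m
      · rw [if_pos h2]
        unfold wv dv at hk
        rw [if_neg h1, if_neg h1, if_pos h2, if_pos h2] at hk
        linarith
      · rw [if_neg h2]
        unfold wv dv at hk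
        rw [if_neg h1, if_neg h1, if_neg h2, if_neg h2] at hk
        have hω := omg_ne N ((i : ℕ) - m + 1)
        have hd : -(3 / 2) / omg N ((i : ℕ) - m + 1) ^ 2 ≠ 0 :=
          div_ne_zero (by norm_num) (pow_ne_zero 2 hω)
        have : dv m N i * v i = 0 := by
          unfold dv
          rw [if_neg h1, if_neg h2]
          linarith
        unfold dv at this
        rw [if_neg h1, if_neg h2] at this
        exact (mul_eq_zero.mp this).resolve_left hd
  have hfin : S = (4 * (m : ℝ)) * S + 2 * S := by
    calc S = ∑ i, wv m N i * v i := hS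
      _ = (∑ k ∈ Icc 1 m, 4 * S) + (∑ k ∈ Icc 1 m, (0 : ℝ)) + 2 * S := by
          rw [sum_fin_split m (fun i => wv m N i * v i)]
          congr 1
          · congr 1
            · refine Finset.sum_congr rfl fun k hk => ?_
              obtain ⟨hk1, hk2⟩ := Finset.mem_Icc.mp hk
              rw [wv_eval1 hk1 hk2, hval (vidx m (k - 1)), vidx_val m _ (by omega)]
              rw [if_pos (by omega : k - 1 < m)]
              rw [show k - 1 + 1 = k from by omega]
              field_simp [omg_ne N k]
            · refine Finset.sum_congr rfl fun k hk => ?_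
              obtain ⟨hk1, hk2⟩ := Finset.mem_Icc.mp hk
              rw [wv_eval2 hk1 hk2, zero_mul]
          · rw [wv_eval3, hval (vidx m (2 * m)), vidx_val m _ (by omega)]
            rw [if_neg (by omega), if_pos rfl, one_mul]
      _ = (4 * (m : ℝ)) * S + 2 * S := by
          rw [Finset.sum_const, Finset.sum_const]
          simp [Nat.card_Icc]
          ring
  have hS0 : S = 0 := by
    have h1 : (4 * (m : ℝ) + 1) * S = 0 := by linarith
    exact (mul_eq_zero.mp h1).resolve_left (by positivity)
  apply hv0
  funext i
  have := hval i
  rw [hS0] at this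
  simpa using this

/-- Let `N ≥ 3` be odd, `m = (N−1)/2`, `β ≠ 0`, and let `h` be the
fourth-order normal form of the periodic KG lattice written as a quadratic polynomial
of the action variables on `ℝ^{2m+1}`.  Then the `(2m+1)×(2m+1)` Hessian matrix of `h`
(a constant matrix) is invertible, i.e. the normal form satisfies the Kolmogorov
nondegeneracy condition. -/
theorem KG_odd_normal_form_KAM_nondegenerate (N : ℕ) (hN : 3 ≤ N) (hodd : Odd N)
    (m : ℕ) (hm : m = (N - 1) / 2) (β : ℝ) (hβ : β ≠ 0) :
    IsUnit (Matrix.of fun i j : Fin (2 * m + 1) =>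
      fderiv ℝ (fun v => fderiv ℝ (hquad m N β) v (Pi.single j (1 : ℝ))) 0
        (Pi.single i (1 : ℝ))) := by
  have hN0 : N ≠ 0 := by omega
  have hEq : (Matrix.of fun i j : Fin (2 * m + 1) =>
      fderiv ℝ (fun v => fderiv ℝ (hquad m N β) v (Pi.single j (1 : ℝ))) 0
        (Pi.single i (1 : ℝ))) = Mmat m N β := by
    ext i j
    rw [Matrix.of_apply, hquad_eq m N hN0 β,
      hess_quad (fun p q => Mmat m N β p q / 2) i j, Mmat_symm m N β j i]
    ring
  rw [hEq]
  exact Mmat_isUnit m N hN0 β hβ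

end
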